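/- For every K > 1 there exist dimensions d_P, d_Q ≥ 1 and a density matrix ρ = [[A, B],[B*, C]] on ℂ^{d_P+d_Q} with A and C positive definite, B ≠ 0, and 0 < Tr(C) < λ_min(A), such that Tr[B* Ω_{A,C}⁻¹(B)] ≥ K · ‖B‖_F² · log(λ_min(A) / Tr(C)). -/

import Mathlib

open Matrix MeasureTheory
open scoped ComplexOrder

noncomputable section


attribute [local instance] Matrix.frobeniusNormedAddCommGroup Matrix.frobeniusNormedSpace

/-- BKM kernel `Ω_{A,C}⁻¹(B) = ∫₀^∞ (A+rI)⁻¹ B (C+rI)⁻¹ dr` (Bochner integral). -/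
def Omega {dP dQ : ℕ} (A : Matrix (Fin dP) (Fin dP) ℂ) (C : Matrix (Fin dQ) (Fin dQ) ℂ)
    (B : Matrix (Fin dP) (Fin dQ) ℂ) : Matrix (Fin dP) (Fin dQ) ℂ :=
  ∫ r in Set.Ioi (0 : ℝ), (A + r • 1)⁻¹ * B * (C + r • 1)⁻¹

namespace BKMAux

open Set Filter

lemma real_int {a c : ℝ} (ha : 0 < a) (hc : 0 < c) (hca : c < a) :
    ∫ r in Set.Ioi (0:ℝ), ((a+r)*(c+r))⁻¹ = (Real.log a - Real.log c)/(a-c) := by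
  have hne : a - c ≠ 0 := by linarith
  have hderiv : ∀ r ∈ Set.Ici (0:ℝ), HasDerivAt
      (fun r => (Real.log (c+r) - Real.log (a+r))/(a-c)) (((a+r)*(c+r))⁻¹) r := by
    intro r hr
    have hcr : (0:ℝ) < c + r := by linarith [hr.out]
    have har : (0:ℝ) < a + r := by linarith [hr.out]
    have h1 : HasDerivAt (fun r => Real.log (c+r)) (c+r)⁻¹ r := by
      simpa using (((hasDerivAt_id r).const_add c).log hcr.ne')
    have h2 : HasDerivAt (fun r => Real.log (a+r)) (a+r)⁻¹ r := by
      simpa using (((hasDerivAt_id r).const_add a).log har.ne')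
    have := (h1.sub h2).div_const (a-c)
    refine this.congr_deriv ?_
    field_simp
    ring
  have htend : Tendsto (fun r => (Real.log (c+r) - Real.log (a+r))/(a-c)) atTop (nhds 0) := by
    have h1 : Tendsto (fun r : ℝ => (c+r)/(a+r)) atTop (nhds 1) := by
      have h0 : Tendsto (fun r : ℝ => (a-c)/(a+r)) atTop (nhds 0) :=
        tendsto_const_nhds.div_atTop (tendsto_atTop_add_const_left _ a tendsto_id)
      have := (tendsto_const_nhds (x := (1:ℝ)) (f := atTop)).sub h0
      rw [sub_zero] at this
      refine this.congr' ?_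
      filter_upwards [Filter.eventually_gt_atTop 0] with r hr
      have har : (0:ℝ) < a + r := by linarith
      field_simp
      ring
    have h2 : Tendsto (fun r : ℝ => Real.log ((c+r)/(a+r))) atTop (nhds 0) := by
      have := (Real.continuousAt_log one_ne_zero).tendsto.comp h1
      simpa [Function.comp_def] using this
    have h3 : Tendsto (fun r : ℝ => Real.log (c+r) - Real.log (a+r)) atTop (nhds 0) := by
      refine h2.congr' ?_
      filter_upwards [Filter.eventually_gt_atTop 0] with r hr
      rw [Real.log_div (by positivity) (by positivity)]
    simpa using h3.div_const (a-c)
  have key := integral_Ioi_of_hasDerivAt_of_nonneg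
    ((hderiv 0 self_mem_Ici).continuousAt.continuousWithinAt)
    (fun x hx => hderiv x (Set.Ioi_subset_Ici_self hx))
    (fun x hx => by
      have : (0:ℝ) < x := hx
      positivity) htend
  rw [key, add_zero, add_zero]
  ring

lemma inv_smul_one (z : ℂ) : (z • (1 : Matrix (Fin 1) (Fin 1) ℂ))⁻¹ = z⁻¹ • 1 := by
  rw [Matrix.inv_def, Matrix.adjugate_subsingleton, Matrix.det_fin_one]
  simp [Ring.inverse_eq_inv']

lemma add_real_smul (a : ℝ) (r : ℝ) :
    (a:ℂ) • (1 : Matrix (Fin 1) (Fin 1) ℂ) + r • 1 = ((a+r : ℝ):ℂ) • 1 := by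
  ext i j
  simp [Matrix.smul_apply, Matrix.one_apply, Complex.real_smul]
  split <;> push_cast <;> ring

lemma smul_one_mul_mul (z w b : ℂ) :
    (z • (1 : Matrix (Fin 1) (Fin 1) ℂ)) * (b • 1) * (w • 1)
      = (z * w) • (b • (1: Matrix (Fin 1) (Fin 1) ℂ)) := by
  simp [smul_mul_assoc, mul_smul_comm, smul_smul]
  ring_nf

lemma posdef_smul_one (a : ℝ) (ha : 0 < a) :
    ((a:ℂ) • (1 : Matrix (Fin 1) (Fin 1) ℂ)).PosDef := by
  rw [Matrix.smul_one_eq_diagonal, Matrix.posDef_diagonal_iff]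
  intro i
  exact_mod_cast ha

lemma eig_smul_one (a : ℝ) (hA : ((a:ℂ) • (1 : Matrix (Fin 1) (Fin 1) ℂ)).PosDef) :
    (⨅ i, hA.1.eigenvalues i) = a := by
  have h := hA.1.det_eq_prod_eigenvalues
  rw [Matrix.det_fin_one] at h
  simp only [Fin.prod_univ_one, Matrix.smul_apply, Matrix.one_apply_eq, smul_eq_mul, mul_one] at h
  rw [ciInf_unique, show (default : Fin 1) = 0 from rfl]
  simpa using congrArg Complex.re h.symm

lemma psd_block (a c : ℝ) (ha : 0 ≤ a) (hc : 0 ≤ c) :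
    (fromBlocks ((a:ℂ) • (1 : Matrix (Fin 1) (Fin 1) ℂ))
      ((Real.sqrt (a*c) : ℂ) • (1 : Matrix (Fin 1) (Fin 1) ℂ))
      ((Real.sqrt (a*c) : ℂ) • (1 : Matrix (Fin 1) (Fin 1) ℂ))ᴴ
      ((c:ℂ) • (1 : Matrix (Fin 1) (Fin 1) ℂ))).PosSemidef := by
  have key : (fromBlocks ((a:ℂ) • (1 : Matrix (Fin 1) (Fin 1) ℂ))
      ((Real.sqrt (a*c) : ℂ) • 1) ((Real.sqrt (a*c) : ℂ) • 1)ᴴ ((c:ℂ) • 1)) =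
      (Matrix.of fun (_ : Fin 1) (j : Fin 1 ⊕ Fin 1) =>
        Sum.elim (fun _ => (Real.sqrt a : ℂ)) (fun _ => (Real.sqrt c : ℂ)) j)ᴴ *
      (Matrix.of fun (_ : Fin 1) (j : Fin 1 ⊕ Fin 1) =>
        Sum.elim (fun _ => (Real.sqrt a : ℂ)) (fun _ => (Real.sqrt c : ℂ)) j) := by
    ext i j
    rcases i with i | i <;> rcases j with j | j <;>
      simp [Matrix.mul_apply, Fin.sum_univ_one, Matrix.fromBlocks, Matrix.smul_apply,
        Matrix.one_apply, Subsingleton.elim i j, Matrix.conjTranspose_apply] <;>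
      rw [← Complex.ofReal_mul] <;> norm_cast
    · exact (Real.mul_self_sqrt ha).symm
    · rw [← Real.sqrt_mul ha]
    · rw [mul_comm (Real.sqrt c), ← Real.sqrt_mul ha]
    · exact (Real.mul_self_sqrt hc).symm
  rw [key]
  exact Matrix.posSemidef_conjTranspose_mul_self _

end BKMAux

/-- Operator–scalar separation: for every `K > 1` there is a finite-dimensional
density matrix `ρ = [[A,B],[B*,C]]` with `A, C` positive definite, `B ≠ 0`,
`0 < Tr C < λ_min(A)`, and
`Tr[B* Ω_{A,C}⁻¹(B)] ≥ K ‖B‖_F² log(λ_min(A)/Tr C)`. -/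
theorem bkm_operator_scalar_separation (K : ℝ) (hK : 1 < K) :
    ∃ (dP dQ : ℕ) (A : Matrix (Fin dP) (Fin dP) ℂ)
      (C : Matrix (Fin dQ) (Fin dQ) ℂ) (B : Matrix (Fin dP) (Fin dQ) ℂ)
      (hA : A.PosDef) (_hC : C.PosDef),
      1 ≤ dP ∧ 1 ≤ dQ ∧ B ≠ 0 ∧
      (fromBlocks A B Bᴴ C).PosSemidef ∧ (fromBlocks A B Bᴴ C).trace = 1 ∧
      0 < (C.trace).re ∧ (C.trace).re < ⨅ i, hA.1.eigenvalues i ∧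
      ((Bᴴ * Omega A C B).trace).re ≥
        K * ((Bᴴ * B).trace).re *
          Real.log ((⨅ i, hA.1.eigenvalues i) / (C.trace).re) := by
  classical
  have hK0 : 0 < K := by linarith
  set ε : ℝ := 1/(2*K) with hεdef
  have hε : 0 < ε := by positivity
  have hε2 : ε < 1/2 := by
    rw [hεdef]
    rw [div_lt_div_iff₀ (by positivity) (by norm_num)]
    linarith
  set a : ℝ := (1+ε)/2 with hadef
  set c : ℝ := (1-ε)/2 with hcdef
  have ha : 0 < a := by rw [hadef]; linarith
  have hc : 0 < c := by rw [hcdef]; linarith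
  have hca : c < a := by rw [hadef, hcdef]; linarith
  have hacsum : a + c = 1 := by rw [hadef, hcdef]; ring
  have hacdiff : a - c = ε := by rw [hadef, hcdef]; ring
  set b : ℝ := Real.sqrt (a*c) with hbdef
  have hb : 0 < b := Real.sqrt_pos.mpr (by positivity)
  refine ⟨1, 1, (a:ℂ) • 1, (c:ℂ) • 1, (b:ℂ) • 1,
    BKMAux.posdef_smul_one a ha, BKMAux.posdef_smul_one c hc, le_refl 1, le_refl 1,
    ?_, ?_, ?_, ?_, ?_, ?_⟩
  · -- B ≠ 0
    intro h
    have h00 := congrFun (congrFun h 0) 0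
    simp [Matrix.smul_apply, Matrix.one_apply] at h00
    exact hb.ne' h00
  · exact BKMAux.psd_block a c ha.le hc.le
  · -- trace = 1
    simp only [Matrix.trace, Matrix.diag, Fintype.sum_sum_type, Fin.sum_univ_one,
      Matrix.fromBlocks_apply₁₁, Matrix.fromBlocks_apply₂₂, Matrix.smul_apply,
      Matrix.one_apply_eq, smul_eq_mul, mul_one]
    exact_mod_cast congrArg (fun x : ℝ => (x : ℂ)) hacsum
  · -- 0 < Tr C
    simp [Matrix.trace, Matrix.diag, Fin.sum_univ_one, Matrix.smul_apply, Matrix.one_apply_eq]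
    exact hc
  · -- Tr C < λmin A
    rw [BKMAux.eig_smul_one a (BKMAux.posdef_smul_one a ha)]
    simpa [Matrix.trace, Matrix.diag, Fin.sum_univ_one, Matrix.smul_apply,
      Matrix.one_apply_eq] using hca
  · -- main inequality
    set L : ℝ := Real.log a - Real.log c with hLdef
    have hL : 0 < L := sub_pos.mpr (Real.log_lt_log hc hca)
    have hOmega : Omega ((a:ℂ) • 1) ((c:ℂ) • 1) ((b:ℂ) • (1 : Matrix (Fin 1) (Fin 1) ℂ))
        = ((L/ε : ℝ) : ℂ) • ((b:ℂ) • 1) := by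
      have h1 : Set.EqOn
          (fun r : ℝ => ((a:ℂ) • (1 : Matrix (Fin 1) (Fin 1) ℂ) + r • 1)⁻¹ *
            ((b:ℂ) • 1) * ((c:ℂ) • 1 + r • 1)⁻¹)
          (fun r : ℝ => ((((a+r)*(c+r))⁻¹ : ℝ) : ℂ) • ((b:ℂ) • 1))
          (Set.Ioi (0:ℝ)) := by
        intro r _
        simp only
        rw [BKMAux.add_real_smul a r, BKMAux.add_real_smul c r,
          BKMAux.inv_smul_one, BKMAux.inv_smul_one, BKMAux.smul_one_mul_mul]
        congr 1
        push_cast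
        rw [mul_inv]
      have hint : (∫ x in Set.Ioi (0:ℝ), ((((a+x)*(c+x))⁻¹ : ℝ) : ℂ))
          = ((∫ x in Set.Ioi (0:ℝ), ((a+x)*(c+x))⁻¹ : ℝ) : ℂ) := integral_ofReal
      rw [Omega, setIntegral_congr_fun measurableSet_Ioi h1, integral_smul_const,
        hint, BKMAux.real_int ha hc hca, ← hLdef, hacdiff]
    rw [hOmega]
    have hBHB : ((b:ℂ) • (1 : Matrix (Fin 1) (Fin 1) ℂ))ᴴ *
        (((L/ε : ℝ) : ℂ) • ((b:ℂ) • 1)) = (((L/ε) * (b*b) : ℝ) : ℂ) • 1 := by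
      ext i j
      simp [Matrix.mul_apply, Fin.sum_univ_one, Matrix.smul_apply, Matrix.one_apply,
        Matrix.conjTranspose_apply, Complex.conj_ofReal, Subsingleton.elim i j, Subsingleton.elim j 0]
      push_cast
      ring
    have hBB : ((b:ℂ) • (1 : Matrix (Fin 1) (Fin 1) ℂ))ᴴ * ((b:ℂ) • 1)
        = ((b*b : ℝ) : ℂ) • 1 := by
      ext i j
      simp [Matrix.mul_apply, Fin.sum_univ_one, Matrix.smul_apply, Matrix.one_apply,
        Matrix.conjTranspose_apply, Complex.conj_ofReal, Subsingleton.elim i j, Subsingleton.elim j 0]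
    rw [hBHB, hBB]
    have htr : ∀ x : ℝ, (((x:ℂ) • (1 : Matrix (Fin 1) (Fin 1) ℂ)).trace).re = x := by
      intro x
      simp [Matrix.trace, Matrix.diag, Fin.sum_univ_one, Matrix.smul_apply, Matrix.one_apply_eq]
    rw [htr, htr, BKMAux.eig_smul_one a (BKMAux.posdef_smul_one a ha)]
    have htrC : ((((c:ℝ):ℂ) • (1 : Matrix (Fin 1) (Fin 1) ℂ)).trace).re = c := htr c
    rw [htrC]
    rw [Real.log_div ha.ne' hc.ne', ← hLdef]
    have hεK : ε = 1/(2*K) := hεdef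
    rw [div_eq_mul_inv L ε, hεK]
    have : (1/(2*K))⁻¹ = 2*K := by
      rw [one_div, inv_inv]
    rw [this]
    have hbb : 0 < b*b := by positivity
    nlinarith [mul_pos hL hbb, mul_pos hK0 (mul_pos hL hbb)]
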